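/- Let f_0 ∈ H_1 and let h be a real nonnegative function on X bounded by 1. Let C* be a symmetric subset of H (C* = −C*) such that for ζ-almost every x ∈ X the function θ ↦ h(x)π_θ(x) belongs to the orthogonal complement of C* in H. Then inf over f̂ ∈ S_n of sup over f ∈ (f_0 + C*) ∩ H_1 of E_f‖f̂ − f‖_H² is at least sup{ ‖f‖_H² : f ∈ C*, f_0 + f ∈ H_1 and f_0 − f ∈ H_1 } multiplied by (π_{f_0} h)^n, where π_{f_0} h = ∫_X h dπ_{f_0}. -/

import Mathlib

/- Proposition 2 of Roueff–Rydén: in the dominated mixture model (`H = L²(ν)`), let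
`f₀ ∈ H₁`, `h : X → [0,1]`, and let `C*` be a symmetric subset of `H` such that for
ζ-a.e. `x` the map `θ ↦ h(x) π_θ(x)` belongs to `C*^⊥`. Then
`inf_{f̂ ∈ S_n} sup_{f ∈ (f₀+C*) ∩ H₁} E_f ‖f̂-f‖² ≥
  sup{‖f‖² : f ∈ C*, f₀ ± f ∈ H₁} (π_{f₀} h)^n`. -/

open MeasureTheory ENNReal

noncomputable section

/-- The mixture distribution `π_f` on `X`. -/
def mixX {X : Type*} [MeasurableSpace X] (ζ : Measure X)
    {α : Type*} [MeasurableSpace α] (ν : Measure α) (π : α → X → ℝ)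
    (f : Lp ℝ 2 ν) : Measure X :=
  ζ.withDensity fun x => ENNReal.ofReal (∫ θ, π θ x * f θ ∂ν)

/-- Probability densities belonging to `H`. -/
def H1 {α : Type*} [MeasurableSpace α] (ν : Measure α) : Set (Lp ℝ 2 ν) :=
  {f | 0 ≤ᵐ[ν] ⇑f ∧ ∫ θ, f θ ∂ν = 1}

theorem pi_mono' {ι : Type*} [Fintype ι] {α : ι → Type*} [∀ i, MeasurableSpace (α i)]
    {μ μ' : ∀ i, Measure (α i)} (h : ∀ i, μ i ≤ μ' i) :
    Measure.pi μ ≤ Measure.pi μ' := by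
  refine Measure.le_iff.2 fun s hs => ?_
  rw [Measure.pi, Measure.pi, toMeasure_apply _ _ hs, toMeasure_apply _ _ hs]
  have hle : (OuterMeasure.pi fun i => (μ i).toOuterMeasure)
      ≤ OuterMeasure.pi fun i => (μ' i).toOuterMeasure := by
    rw [OuterMeasure.le_pi]
    intro t _
    exact (OuterMeasure.pi_pi_le _ t).trans (Finset.prod_le_prod' fun i _ => h i _)
  exact hle s

theorem statement1
    {X : Type*} [MeasurableSpace X] (ζ : Measure X) [SigmaFinite ζ]
    {d : ℕ} {Θ : Set (Fin d → ℝ)} (hΘ : MeasurableSet Θ)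
    (ν : Measure Θ) [SigmaFinite ν]
    (π : Θ → X → ℝ)
    (hπ_meas : Measurable (Function.uncurry π))
    (hπ_nonneg : ∀ θ x, 0 ≤ π θ x)
    (hπ_int : ∀ θ, ∫ x, π θ x ∂ζ = 1)
    (n : ℕ) (hn : 0 < n)
    (f₀ : Lp ℝ 2 ν) (hf₀ : f₀ ∈ H1 ν)
    (h : X → ℝ) (hh_meas : Measurable h)
    (hh_nonneg : ∀ x, 0 ≤ h x) (hh_le_one : ∀ x, h x ≤ 1)
    (Cstar : Set (Lp ℝ 2 ν))
    (hC_symm : ∀ f ∈ Cstar, -f ∈ Cstar)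
    -- for ζ-a.e. x, the map θ ↦ h(x) π_θ(x) belongs to the orthogonal complement of C*
    (hC_perp : ∀ᵐ x ∂ζ, ∃ gx : Lp ℝ 2 ν,
      ⇑gx =ᵐ[ν] (fun θ => h x * π θ x) ∧ ∀ c ∈ Cstar, (inner ℝ gx c : ℝ) = 0) :
    (⨆ (f : Lp ℝ 2 ν) (_ : f ∈ Cstar ∧ f₀ + f ∈ H1 ν ∧ f₀ - f ∈ H1 ν),
        ENNReal.ofReal (‖f‖ ^ 2)) *
      (∫⁻ x, ENNReal.ofReal (h x) ∂(mixX ζ ν π f₀)) ^ n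
    ≤ ⨅ (fhat : (Fin n → X) → Lp ℝ 2 ν) (_ : @Measurable _ _ _ (borel _) fhat),
        ⨆ (f : Lp ℝ 2 ν) (_ : f ∈ {f | ∃ g ∈ Cstar, f = f₀ + g} ∩ H1 ν),
          ∫⁻ x, (‖fhat x - f‖₊ : ℝ≥0∞) ^ 2
            ∂(Measure.pi fun _ : Fin n => mixX ζ ν π f) := by
  classical
  -- density functions
  set p : Lp ℝ 2 ν → X → ℝ := fun g x => ∫ θ, π θ x * g θ ∂ν with hp_def
  have hmeas_p : ∀ g : Lp ℝ 2 ν, Measurable (p g) := by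
    intro g
    have hsm : StronglyMeasurable fun q : X × Θ => π q.2 q.1 * g q.2 := by
      refine StronglyMeasurable.mul ?_ ?_
      · exact (hπ_meas.comp measurable_swap).stronglyMeasurable
      · exact (Lp.stronglyMeasurable g).comp_measurable measurable_snd
    exact hsm.integral_prod_right'.measurable
  have hp_nonneg : ∀ g ∈ H1 ν, ∀ x, 0 ≤ p g x := by
    intro g hg x
    refine integral_nonneg_of_ae ?_
    filter_upwards [hg.1] with θ hθ
    exact mul_nonneg (hπ_nonneg θ x) hθ
  -- the lower-bound measure Q
  set Q : Measure X := ζ.withDensity fun x => ENNReal.ofReal (h x * p f₀ x) with hQ_def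
  haveI : SigmaFinite Q := by
    rw [hQ_def]; infer_instance
  have hQuniv : (∫⁻ x, ENNReal.ofReal (h x) ∂(mixX ζ ν π f₀)) = Q Set.univ := by
    have h1 : (∫⁻ x, ENNReal.ofReal (h x) ∂(mixX ζ ν π f₀))
        = ∫⁻ x, ENNReal.ofReal (p f₀ x) * ENNReal.ofReal (h x) ∂ζ := by
      rw [mixX]
      exact lintegral_withDensity_eq_lintegral_mul ζ
        (hmeas_p f₀).ennreal_ofReal hh_meas.ennreal_ofReal
    rw [h1, hQ_def, withDensity_apply _ MeasurableSet.univ, Measure.restrict_univ]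
    refine lintegral_congr fun x => ?_
    rw [ENNReal.ofReal_mul (hh_nonneg x), mul_comm]
  refine le_iInf fun fhat => le_iInf fun hfhat => ?_
  simp_rw [ENNReal.iSup_mul]
  refine iSup_le fun f => iSup_le fun hf => ?_
  obtain ⟨hfC, hf1, hf2⟩ := hf
  set f₁ := f₀ + f with hf₁_def
  set f₂ := f₀ - f with hf₂_def
  -- key density comparison
  have key : ∀ᵐ x ∂ζ, h x * p f₀ x ≤ p f₁ x ∧ h x * p f₀ x ≤ p f₂ x := by
    filter_upwards [hC_perp] with x hx
    obtain ⟨gx, hgx, hperp⟩ := hx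
    rcases eq_or_lt_of_le (hh_nonneg x) with hx0 | hx0
    · constructor <;> rw [← hx0, zero_mul]
      · exact hp_nonneg f₁ hf1 x
      · exact hp_nonneg f₂ hf2 x
    · have hxne : h x ≠ 0 := ne_of_gt hx0
      have hint : ∀ g : Lp ℝ 2 ν, Integrable (fun θ => π θ x * g θ) ν := by
        intro g
        have h2 : Integrable (fun θ => gx θ * g θ) ν := by
          have := L2.integrable_inner (𝕜 := ℝ) gx g
          simpa [RCLike.inner_apply, mul_comm] using this
        refine (h2.const_mul (h x)⁻¹).congr ?_
        filter_upwards [hgx] with θ e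
        rw [e]; field_simp
      have hzero : ∀ g ∈ Cstar, ∫ θ, π θ x * g θ ∂ν = 0 := by
        intro g hg
        have e1 : (inner ℝ gx g : ℝ) = ∫ θ, gx θ * g θ ∂ν := by
          rw [L2.inner_def]
          simp [RCLike.inner_apply, mul_comm]
        have e2 : ∫ θ, gx θ * g θ ∂ν = h x * ∫ θ, π θ x * g θ ∂ν := by
          rw [← integral_const_mul]
          refine integral_congr_ae ?_
          filter_upwards [hgx] with θ e
          rw [e]; ring
        have := (hperp g hg).symm.trans (e1.trans e2)
        exact (mul_eq_zero.1 this.symm).resolve_left hxne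
      have hpf1 : p f₁ x = p f₀ x := by
        have e : p f₁ x = ∫ θ, (π θ x * f₀ θ + π θ x * f θ) ∂ν := by
          refine integral_congr_ae ?_
          filter_upwards [Lp.coeFn_add f₀ f] with θ e
          show π θ x * (f₀ + f) θ = _
          rw [e]; simp [mul_add]
        rw [e, integral_add (hint f₀) (hint f), hzero f hfC, add_zero]
      have hpf2 : p f₂ x = p f₀ x := by
        have e : p f₂ x = ∫ θ, (π θ x * f₀ θ - π θ x * f θ) ∂ν := by
          refine integral_congr_ae ?_
          filter_upwards [Lp.coeFn_sub f₀ f] with θ e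
          show π θ x * (f₀ - f) θ = _
          rw [e]; simp [mul_sub]
        rw [e, integral_sub (hint f₀) (hint f), hzero f hfC, sub_zero]
      have hb : h x * p f₀ x ≤ p f₀ x := by
        have := hp_nonneg f₀ hf₀ x
        nlinarith [hh_le_one x]
      rw [hpf1, hpf2]
      exact ⟨hb, hb⟩
  -- measure comparison
  have hQle : ∀ (g : Lp ℝ 2 ν), (∀ᵐ x ∂ζ, h x * p f₀ x ≤ p g x) → Q ≤ mixX ζ ν π g := by
    intro g hg
    rw [hQ_def, mixX]
    refine withDensity_mono ?_
    filter_upwards [hg] with x e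
    exact ENNReal.ofReal_le_ofReal e
  have hQ1 : Q ≤ mixX ζ ν π f₁ := hQle f₁ (key.mono fun x e => e.1)
  have hQ2 : Q ≤ mixX ζ ν π f₂ := hQle f₂ (key.mono fun x e => e.2)
  -- measurability of integrands
  letI : MeasurableSpace (Lp ℝ 2 ν) := borel _
  haveI : BorelSpace (Lp ℝ 2 ν) := ⟨rfl⟩
  have hFmeas : ∀ g : Lp ℝ 2 ν,
      Measurable fun x : Fin n → X => (‖fhat x - g‖₊ : ℝ≥0∞) ^ 2 := by
    intro g
    have : Measurable fun x : Fin n → X => fhat x - g :=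
      (continuous_id.sub continuous_const).measurable.comp hfhat
    exact this.enorm.pow_const 2
  -- parallelogram bound
  have hof : ∀ g : Lp ℝ 2 ν, (‖g‖₊ : ℝ≥0∞) ^ 2 = ENNReal.ofReal (‖g‖ ^ 2) := by
    intro g
    rw [ENNReal.ofReal_pow (norm_nonneg _), ofReal_norm]; rfl
  have hpar : ∀ a : Lp ℝ 2 ν,
      2 * ENNReal.ofReal (‖f‖ ^ 2) ≤ (‖a - f₁‖₊ : ℝ≥0∞) ^ 2 + (‖a - f₂‖₊ : ℝ≥0∞) ^ 2 := by
    intro a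
    have hreal : 2 * ‖f‖ ^ 2 ≤ ‖a - f₁‖ ^ 2 + ‖a - f₂‖ ^ 2 := by
      have hpl := parallelogram_law_with_norm ℝ (a - f₁) (a - f₂)
      have hdiff : (a - f₁) - (a - f₂) = -((2 : ℝ) • f) := by
        rw [hf₁_def, hf₂_def, two_smul]; abel
      have hnd : ‖(a - f₁) - (a - f₂)‖ = 2 * ‖f‖ := by
        rw [hdiff, norm_neg, norm_smul, Real.norm_two]
      rw [hnd] at hpl
      nlinarith [hpl, mul_self_nonneg ‖(a - f₁) + (a - f₂)‖]
    calc 2 * ENNReal.ofReal (‖f‖ ^ 2) = ENNReal.ofReal (2 * ‖f‖ ^ 2) := by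
          rw [ENNReal.ofReal_mul (by norm_num)]; norm_num
      _ ≤ ENNReal.ofReal (‖a - f₁‖ ^ 2 + ‖a - f₂‖ ^ 2) := ENNReal.ofReal_le_ofReal hreal
      _ = (‖a - f₁‖₊ : ℝ≥0∞) ^ 2 + (‖a - f₂‖₊ : ℝ≥0∞) ^ 2 := by
          rw [ENNReal.ofReal_add (sq_nonneg _) (sq_nonneg _), hof, hof]
  -- the two risks
  set S := ⨆ (g : Lp ℝ 2 ν) (_ : g ∈ {f | ∃ g ∈ Cstar, f = f₀ + g} ∩ H1 ν),
      ∫⁻ x, (‖fhat x - g‖₊ : ℝ≥0∞) ^ 2 ∂(Measure.pi fun _ : Fin n => mixX ζ ν π g) with hS_def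
  have hmem1 : f₁ ∈ {f | ∃ g ∈ Cstar, f = f₀ + g} ∩ H1 ν := ⟨⟨f, hfC, rfl⟩, hf1⟩
  have hmem2 : f₂ ∈ {f | ∃ g ∈ Cstar, f = f₀ + g} ∩ H1 ν :=
    ⟨⟨-f, hC_symm f hfC, (sub_eq_add_neg f₀ f)⟩, hf2⟩
  have hS1 : (∫⁻ x, (‖fhat x - f₁‖₊ : ℝ≥0∞) ^ 2 ∂(Measure.pi fun _ : Fin n => mixX ζ ν π f₁)) ≤ S :=
    le_iSup_of_le f₁ (le_iSup_of_le hmem1 le_rfl)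
  have hS2 : (∫⁻ x, (‖fhat x - f₂‖₊ : ℝ≥0∞) ^ 2 ∂(Measure.pi fun _ : Fin n => mixX ζ ν π f₂)) ≤ S :=
    le_iSup_of_le f₂ (le_iSup_of_le hmem2 le_rfl)
  -- main chain
  have hQn : (Measure.pi fun _ : Fin n => Q) Set.univ = (Q Set.univ) ^ n := by
    rw [Measure.pi_univ]
    simp
  have hmain : 2 * (ENNReal.ofReal (‖f‖ ^ 2) * (Q Set.univ) ^ n) ≤ 2 * S := by
    calc 2 * (ENNReal.ofReal (‖f‖ ^ 2) * (Q Set.univ) ^ n)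
        = (2 * ENNReal.ofReal (‖f‖ ^ 2)) * (Measure.pi fun _ : Fin n => Q) Set.univ := by
          rw [hQn, mul_assoc]
      _ = ∫⁻ _, 2 * ENNReal.ofReal (‖f‖ ^ 2) ∂(Measure.pi fun _ : Fin n => Q) := by
          rw [lintegral_const]
      _ ≤ ∫⁻ x, ((‖fhat x - f₁‖₊ : ℝ≥0∞) ^ 2 + (‖fhat x - f₂‖₊ : ℝ≥0∞) ^ 2)
            ∂(Measure.pi fun _ : Fin n => Q) := lintegral_mono fun x => hpar (fhat x)
      _ = (∫⁻ x, (‖fhat x - f₁‖₊ : ℝ≥0∞) ^ 2 ∂(Measure.pi fun _ : Fin n => Q))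
          + ∫⁻ x, (‖fhat x - f₂‖₊ : ℝ≥0∞) ^ 2 ∂(Measure.pi fun _ : Fin n => Q) :=
          lintegral_add_left (hFmeas f₁) _
      _ ≤ (∫⁻ x, (‖fhat x - f₁‖₊ : ℝ≥0∞) ^ 2 ∂(Measure.pi fun _ : Fin n => mixX ζ ν π f₁))
          + ∫⁻ x, (‖fhat x - f₂‖₊ : ℝ≥0∞) ^ 2 ∂(Measure.pi fun _ : Fin n => mixX ζ ν π f₂) := by
          gcongr
          · exact pi_mono' fun _ => hQ1
          · exact pi_mono' fun _ => hQ2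
      _ ≤ S + S := add_le_add hS1 hS2
      _ = 2 * S := (two_mul S).symm
  rw [hQuniv]
  exact (ENNReal.mul_le_mul_iff_right (a := 2) two_ne_zero ofNat_ne_top).1 hmain


end
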